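/- Let σ > 0, Δ ∈ ℝ, μ = N(Δ, σ²) and ν = N(0, σ²) one-dimensional Gaussian measures. Then the privacy loss random variable L(x) = log((dμ/dν)(x)) satisfies L(x) = (Δ/σ²)·x − Δ²/(2σ²) ν-almost everywhere, and the pushforward of μ under L is the Gaussian measure N(Δ²/(2σ²), Δ²/σ²) on ℝ. -/

import Mathlib

open MeasureTheory ProbabilityTheory Real

lemma gaussian_pdf_ratio (Δ : ℝ) (v : NNReal) (hv : v ≠ 0) (x : ℝ) :
    gaussianPDFReal Δ v x / gaussianPDFReal 0 v x
      = rexp ((Δ / (v : ℝ)) * x - Δ ^ 2 / (2 * (v : ℝ))) := by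
  have hvpos : (0 : ℝ) < (v : ℝ) := by positivity
  have hc : (√(2 * π * v))⁻¹ ≠ 0 := by positivity
  rw [gaussianPDFReal, gaussianPDFReal, mul_div_mul_left _ _ hc, ← Real.exp_sub]
  congr 1
  field_simp
  ring

lemma gaussian_rnDeriv_ae (Δ : ℝ) (v : NNReal) (hv : v ≠ 0) :
    (fun x => ((gaussianReal Δ v).rnDeriv (gaussianReal 0 v) x))
      =ᵐ[gaussianReal 0 v]
    (fun x => ENNReal.ofReal (rexp ((Δ / (v : ℝ)) * x - Δ ^ 2 / (2 * (v : ℝ))))) := by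
  set h : ℝ → ENNReal :=
    fun x => ENNReal.ofReal (rexp ((Δ / (v : ℝ)) * x - Δ ^ 2 / (2 * (v : ℝ)))) with hh
  have hmeas : Measurable h := by
    apply Measurable.ennreal_ofReal
    exact (((measurable_id.const_mul _).sub measurable_const).exp)
  have key : gaussianReal Δ v = (gaussianReal 0 v).withDensity h := by
    rw [gaussianReal_of_var_ne_zero _ hv, gaussianReal_of_var_ne_zero _ hv,
      ← withDensity_mul _ (measurable_gaussianPDF 0 v) hmeas]
    congr 1
    funext x
    have hgpos : 0 < gaussianPDFReal 0 v x := gaussianPDFReal_pos _ _ _ hv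
    simp only [Pi.mul_apply, hh, gaussianPDF]
    rw [← ENNReal.ofReal_mul (gaussianPDFReal_nonneg 0 v x),
      ← gaussian_pdf_ratio Δ v hv x, mul_comm, div_mul_cancel₀ _ hgpos.ne']
  rw [key]
  exact Measure.rnDeriv_withDensity _ hmeas

theorem gaussian_privacy_loss_distribution (σ : NNReal) (hσ : 0 < σ) (Δ : ℝ) :
    (∀ᵐ x ∂(gaussianReal 0 (σ ^ 2)),
        Real.log (((gaussianReal Δ (σ ^ 2)).rnDeriv (gaussianReal 0 (σ ^ 2)) x).toReal) =
          (Δ / (σ : ℝ) ^ 2) * x - Δ ^ 2 / (2 * (σ : ℝ) ^ 2)) ∧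
      (gaussianReal Δ (σ ^ 2)).map
          (fun x =>
            Real.log (((gaussianReal Δ (σ ^ 2)).rnDeriv (gaussianReal 0 (σ ^ 2)) x).toReal)) =
        gaussianReal (Δ ^ 2 / (2 * (σ : ℝ) ^ 2)) (Real.toNNReal (Δ ^ 2 / (σ : ℝ) ^ 2)) := by
  have hv : (σ ^ 2 : NNReal) ≠ 0 := by positivity
  have hcoe : ((σ ^ 2 : NNReal) : ℝ) = (σ : ℝ) ^ 2 := by push_cast; ring
  have hσpos : (0 : ℝ) < (σ : ℝ) ^ 2 := by positivity
  have hae := gaussian_rnDeriv_ae Δ (σ ^ 2) hv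
  rw [hcoe] at hae
  have haelog : ∀ᵐ x ∂(gaussianReal 0 (σ ^ 2)),
      Real.log (((gaussianReal Δ (σ ^ 2)).rnDeriv (gaussianReal 0 (σ ^ 2)) x).toReal) =
        (Δ / (σ : ℝ) ^ 2) * x - Δ ^ 2 / (2 * (σ : ℝ) ^ 2) := by
    filter_upwards [hae] with x hx
    rw [hx, ENNReal.toReal_ofReal (exp_nonneg _), Real.log_exp]
  refine ⟨haelog, ?_⟩
  have hac : gaussianReal Δ (σ ^ 2) ≪ gaussianReal 0 (σ ^ 2) :=
    (gaussianReal_absolutelyContinuous Δ hv).trans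
      (gaussianReal_absolutelyContinuous' 0 hv)
  have haelogμ := hac.ae_le haelog
  rw [Measure.map_congr haelogμ]
  have hmapeq : (gaussianReal Δ (σ ^ 2)).map
      (fun x => (Δ / (σ : ℝ) ^ 2) * x - Δ ^ 2 / (2 * (σ : ℝ) ^ 2))
      = ((gaussianReal Δ (σ ^ 2)).map (fun x => (Δ / (σ : ℝ) ^ 2) * x)).map
          (fun x => x + (- (Δ ^ 2 / (2 * (σ : ℝ) ^ 2)))) := by
    rw [Measure.map_map (measurable_add_const _) (measurable_const_mul _)]
    rfl
  rw [hmapeq]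
  have h1 : (gaussianReal Δ (σ ^ 2)).map (fun x => (Δ / (σ : ℝ) ^ 2) * x)
      = gaussianReal ((Δ / (σ : ℝ) ^ 2) * Δ)
          (⟨(Δ / (σ : ℝ) ^ 2) ^ 2, sq_nonneg _⟩ * σ ^ 2) :=
    gaussianReal_map_const_mul _
  rw [h1, gaussianReal_map_add_const]
  congr 1
  · field_simp
    ring
  · ext
    rw [Real.coe_toNNReal _ (by positivity)]
    change (Δ / (σ : ℝ) ^ 2) ^ 2 * ((σ ^ 2 : NNReal) : ℝ) = _
    push_cast
    field_simp
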